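/- For h > 0 and 0 < α with Re(x) > α, one has the convergent factorial-series expansion 1/(x - α) = Σ_{s≥1} α^{[s-1]_h} · x^{-[s]_h}, where α^{[s-1]_h} = α(α+h)···(α+(s-2)h) (with α^{[0]_h} = 1). -/

import Mathlib

open Finset Filter

/-- The convergent `h`-factorial expansion
`1/(x-α) = Σ_{s≥1} α^{[s-1]_h} x^{-[s]_h}` for `Re x > α > 0`. -/
theorem factorial_series_of_inv_sub
    (h : ℝ) (hh : 0 < h) (α : ℝ) (hα : 0 < α) (x : ℂ) (hx : α < x.re) :
    HasSum
      (fun s : ℕ =>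
        (∏ k ∈ Finset.range s, ((α : ℂ) + (k : ℂ) * (h : ℂ))) *
          (∏ k ∈ Finset.range (s + 1), (x + (k : ℂ) * (h : ℂ)))⁻¹)
      ((x - (α : ℂ))⁻¹) := by
  set β : ℝ := x.re with hβdef
  have hβ0 : 0 < β := lt_trans hα hx
  have hδ : 0 < β - α := by linarith
  set a : ℕ → ℂ := fun s =>
    (∏ k ∈ Finset.range s, ((α : ℂ) + (k : ℂ) * (h : ℂ))) *
      (∏ k ∈ Finset.range (s + 1), (x + (k : ℂ) * (h : ℂ)))⁻¹ with ha
  set P : ℕ → ℂ := fun s => ∏ k ∈ Finset.range s, ((α : ℂ) + (k : ℂ) * (h : ℂ)) with hP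
  set Q : ℕ → ℂ := fun s => ∏ k ∈ Finset.range s, (x + (k : ℂ) * (h : ℂ)) with hQ
  have hre : ∀ k : ℕ, (x + (k : ℂ) * (h : ℂ)).re = β + k * h := by
    intro k; simp [hβdef]
  have habs : ∀ k : ℕ, β + k * h ≤ ‖x + (k : ℂ) * (h : ℂ)‖ := by
    intro k
    have := Complex.re_le_norm (x + (k : ℂ) * (h : ℂ))
    rwa [hre k] at this
  have hpos : ∀ k : ℕ, (0:ℝ) < β + k * h := by
    intro k; have : (0:ℝ) ≤ (k:ℝ) * h := by positivity
    linarith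
  have hfne : ∀ k : ℕ, x + (k : ℂ) * (h : ℂ) ≠ 0 := by
    intro k h0
    have h1 := habs k
    rw [h0] at h1
    simp at h1
    linarith [hpos k]
  have hQne : ∀ s, Q s ≠ 0 := fun s =>
    Finset.prod_ne_zero_iff.2 fun k _ => hfne k
  have hxα : x - (α:ℂ) ≠ 0 := by
    intro h0
    have : (x - (α:ℂ)).re = 0 := by rw [h0]; simp
    simp [Complex.sub_re] at this
    linarith
  -- partial sums formula
  have hpartial : ∀ N, ∑ s ∈ Finset.range N, a s
      = (1 - P N / Q N) * (x - (α:ℂ))⁻¹ := by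
    intro N
    induction N with
    | zero => simp [hP, hQ]
    | succ N ih =>
      rw [Finset.sum_range_succ, ih]
      have hQs : Q (N+1) = Q N * (x + (N:ℂ)*(h:ℂ)) := by
        simp [hQ, Finset.prod_range_succ]
      have hPs : P (N+1) = P N * ((α:ℂ) + (N:ℂ)*(h:ℂ)) := by
        simp [hP, Finset.prod_range_succ]
      have haN : a N = P N * (Q (N+1))⁻¹ := rfl
      rw [haN, hQs, hPs]
      have h1 : Q N ≠ 0 := hQne N
      have h2 : x + (N:ℂ)*(h:ℂ) ≠ 0 := hfne N
      field_simp
      ring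
  -- real comparison products
  set B : ℕ → ℝ := fun N => ∏ k ∈ Finset.range N, ((α + k*h)/(β + k*h)) with hB
  have hBnonneg : ∀ N, 0 ≤ B N := fun N =>
    Finset.prod_nonneg fun k _ => div_nonneg (by positivity) (hpos k).le
  have hnormP : ∀ N, ‖P N‖ = ∏ k ∈ Finset.range N, (α + k*h) := by
    intro N
    rw [hP, Complex.norm_prod]
    refine Finset.prod_congr rfl fun k _ => ?_
    rw [show (α:ℂ) + (k:ℂ)*(h:ℂ) = ((α + k*h : ℝ) : ℂ) by push_cast; ring]
    rw [Complex.norm_of_nonneg (by positivity)]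
  have hnormQ : ∀ N, (∏ k ∈ Finset.range N, (β + k*h)) ≤ ‖Q N‖ := by
    intro N
    rw [hQ, Complex.norm_prod]
    exact Finset.prod_le_prod (fun k _ => (hpos k).le) (fun k _ => habs k)
  have hprodβpos : ∀ N, (0:ℝ) < ∏ k ∈ Finset.range N, (β + k*h) := fun N =>
    Finset.prod_pos fun k _ => hpos k
  have hprodαnonneg : ∀ N, (0:ℝ) ≤ ∏ k ∈ Finset.range N, (α + k*h) := fun N =>
    Finset.prod_nonneg fun k _ => by positivity
  have hBeq : ∀ N, B N = (∏ k ∈ Finset.range N, (α + k*h)) / (∏ k ∈ Finset.range N, (β + k*h)) := by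
    intro N
    rw [hB, ← Finset.prod_div_distrib]
  -- bound on the tail ratio
  have hTbound : ∀ N, ‖P N / Q N‖ ≤ B N := by
    intro N
    rw [norm_div, hnormP, hBeq]
    exact div_le_div₀ (hprodαnonneg N) le_rfl (hprodβpos N) (hnormQ N)
  -- exponential bound
  have hBexp : ∀ N, B N ≤ Real.exp (-((β-α) * ∑ k ∈ Finset.range N, 1/(β+k*h))) := by
    intro N
    have step : ∀ k ∈ Finset.range N,
        (α + k*h)/(β + k*h) ≤ Real.exp (-((β-α)/(β+k*h))) := by
      intro k _
      have hne : (β + k*h) ≠ 0 := (hpos k).ne'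
      have heq : (α + k*h)/(β + k*h) = (-((β-α)/(β+k*h))) + 1 := by
        field_simp
        ring
      rw [heq]
      exact Real.add_one_le_exp _
    calc B N ≤ ∏ k ∈ Finset.range N, Real.exp (-((β-α)/(β+k*h))) :=
          Finset.prod_le_prod (fun k _ => div_nonneg (by positivity) (hpos k).le) step
      _ = Real.exp (∑ k ∈ Finset.range N, -((β-α)/(β+k*h))) := by
          rw [Real.exp_sum]
      _ = Real.exp (-((β-α) * ∑ k ∈ Finset.range N, 1/(β+k*h))) := by
          congr 1
          rw [Finset.mul_sum, ← Finset.sum_neg_distrib]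
          exact Finset.sum_congr rfl fun k _ => by ring
  -- divergence of the harmonic-like sum
  have hdiv : Tendsto (fun N => ∑ k ∈ Finset.range N, 1/(β+k*h)) atTop atTop := by
    set M : ℝ := max β h with hM
    have hM0 : 0 < M := lt_of_lt_of_le hβ0 (le_max_left _ _)
    have key : ∀ N, (1/M) * ∑ k ∈ Finset.range N, (1/((k:ℝ)+1)) ≤
        ∑ k ∈ Finset.range N, 1/(β+k*h) := by
      intro N
      rw [Finset.mul_sum]
      refine Finset.sum_le_sum fun k _ => ?_
      have hk1 : (0:ℝ) < (k:ℝ) + 1 := by positivity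
      rw [div_mul_div_comm, one_mul]
      refine one_div_le_one_div_of_le (hpos k) ?_
      have hb : β ≤ M := le_max_left _ _
      have hhM : h ≤ M := le_max_right _ _
      have hk0 : (0:ℝ) ≤ (k:ℝ) := Nat.cast_nonneg k
      nlinarith
    refine tendsto_atTop_mono key ?_
    exact Real.tendsto_sum_range_one_div_nat_succ_atTop.const_mul_atTop (by positivity)
  have hBto : Tendsto B atTop (nhds 0) := by
    have h1 : Tendsto (fun N => Real.exp (-((β-α) * ∑ k ∈ Finset.range N, 1/(β+k*h))))
        atTop (nhds 0) := by
      apply Real.tendsto_exp_atBot.comp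
      apply tendsto_neg_atTop_atBot.comp
      exact hdiv.const_mul_atTop hδ
    exact squeeze_zero hBnonneg hBexp h1
  have hTto : Tendsto (fun N => P N / Q N) atTop (nhds (0:ℂ)) := by
    refine squeeze_zero_norm (fun N => ?_) hBto
    show ‖P N / Q N‖ ≤ B N
    exact hTbound N
  -- limit of partial sums
  have hSto : Tendsto (fun N => ∑ s ∈ Finset.range N, a s) atTop
      (nhds ((x - (α:ℂ))⁻¹)) := by
    have h1 : Tendsto (fun N => (1 - P N / Q N) * (x - (α:ℂ))⁻¹) atTop
        (nhds ((1 - 0) * (x - (α:ℂ))⁻¹)) :=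
      ((tendsto_const_nhds.sub hTto).mul tendsto_const_nhds)
    simp only [sub_zero, one_mul] at h1
    simpa only [hpartial] using h1
  -- summability
  have hanorm : ∀ s, ‖a s‖ ≤ (B s - B (s+1)) / (β - α) := by
    intro s
    have hBs : B (s+1) = B s * ((α + s*h)/(β + s*h)) := by
      simp only [hB]
      rw [Finset.prod_range_succ]
    have hb1 : ‖a s‖ ≤ B s / (β + s*h) := by
      have h1 : ‖a s‖ = ‖P s‖ / ‖Q (s+1)‖ := by
        show ‖P s * (Q (s+1))⁻¹‖ = _
        rw [norm_mul, norm_inv, div_eq_mul_inv]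
      rw [h1, hnormP]
      have h2 : B s / (β + s*h) =
          (∏ k ∈ Finset.range s, (α + k*h)) / (∏ k ∈ Finset.range (s+1), (β + k*h)) := by
        rw [hBeq, Finset.prod_range_succ, div_div]
      rw [h2]
      exact div_le_div₀ (hprodαnonneg s) le_rfl (hprodβpos (s+1)) (hnormQ (s+1))
    have h3 : (B s - B (s+1)) / (β - α) = B s / (β + s*h) := by
      rw [hBs]
      have hne : (β + s*h) ≠ 0 := (hpos s).ne'
      field_simp
      ring
    rw [h3]
    exact hb1
  have hsummable : Summable a := by
    refine Summable.of_norm ?_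
    refine summable_of_sum_range_le (fun s => norm_nonneg _) (c := 1/(β-α)) (fun N => ?_)
    calc ∑ s ∈ Finset.range N, ‖a s‖
        ≤ ∑ s ∈ Finset.range N, (B s - B (s+1)) / (β - α) :=
          Finset.sum_le_sum fun s _ => hanorm s
      _ = (∑ s ∈ Finset.range N, (B s - B (s+1))) / (β - α) := by
          rw [Finset.sum_div]
      _ = (B 0 - B N) / (β - α) := by rw [Finset.sum_range_sub' B]
      _ ≤ 1/(β-α) := by
          have hB0 : B 0 = 1 := by simp [hB]
          have hBN := hBnonneg N
          rw [hB0]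
          gcongr
          linarith
  have := hsummable.hasSum
  have heq : ∑' s, a s = (x - (α:ℂ))⁻¹ :=
    tendsto_nhds_unique hsummable.hasSum.tendsto_sum_nat hSto
  rw [← heq]
  exact hsummable.hasSum
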